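/- Let F : A → B be a functor between abelian categories with F(0) = 0. For objects X₁, …, Xₙ of A with X = X₁ ⊕ ⋯ ⊕ Xₙ, let e_i ∈ End(X) be the idempotent projecting onto X_i, and for S ⊆ {1,…,n} let e_S = Σ_{i∈S} e_i. Then the endomorphism cr_n := Σ_{S ⊆ {1,…,n}} (−1)^{n−|S|} F(e_S) of F(X) is idempotent. -/

import Mathlib

open CategoryTheory CategoryTheory.Limits ZeroObject
attribute [local instance] CategoryTheory.Abelian.hasFiniteBiproducts

lemma crossEff.neg_one_pow_sub {n k : ℕ} (h : k ≤ n) :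
    (-1 : ℤ) ^ (n - k) = (-1) ^ n * (-1) ^ k := by
  conv_rhs => rw [← Nat.sub_add_cancel h, pow_add]
  rw [mul_assoc, ← pow_add, ← two_mul, pow_mul]
  simp

theorem cross_effect_idempotent_is_idempotent
    {A B : Type*} [Category A] [Category B] [Abelian A] [Abelian B]
    (F : A ⥤ B) (hF : IsZero (F.obj (0 : A)))
    {n : ℕ} (X : Fin n → A)
    (e : Fin n → End (⨁ X)) (he : ∀ i, e i = biproduct.π X i ≫ biproduct.ι X i)
    (cr : End (F.obj (⨁ X)))
    (hcr : cr = ∑ S : Finset (Fin n), ((-1 : ℤ) ^ (n - S.card)) • F.map (∑ i ∈ S, e i)) :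
    cr ≫ cr = cr := by
  classical
  have heij : ∀ i j, e i ≫ e j = if i = j then e i else 0 := by
    intro i j
    by_cases h : i = j
    · subst h; simp [he, biproduct.ι_π]
    · simp [he, biproduct.ι_π_ne _ h, h]
  have hA : ∀ S T : Finset (Fin n),
      (∑ i ∈ S, e i) ≫ (∑ i ∈ T, e i) = ∑ i ∈ S ∩ T, e i := by
    intro S T
    rw [Preadditive.sum_comp]
    rw [← Finset.sum_ite_mem S T]
    refine Finset.sum_congr rfl fun i _ => ?_
    rw [Preadditive.comp_sum]
    simp only [heij]
    simp [Finset.sum_ite_eq]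
  set g : Finset (Fin n) → (F.obj (⨁ X) ⟶ F.obj (⨁ X)) := fun S => F.map (∑ i ∈ S, e i) with hg
  replace hcr : cr = ∑ S : Finset (Fin n), ((-1 : ℤ) ^ (n - S.card)) • g S := hcr
  have hB : ∀ S T, g S ≫ g T = g (S ∩ T) := by
    intro S T
    rw [hg]
    simp only
    rw [← F.map_comp, hA]
  have hcard : ∀ S : Finset (Fin n), S.card ≤ n := fun S => by
    simpa using Finset.card_le_univ S
  have hs : ∀ S : Finset (Fin n), (-1 : ℤ) ^ (n - S.card) = (-1) ^ n * (-1) ^ S.card :=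
    fun S => crossEff.neg_one_pow_sub (hcard S)
  -- key: cr ≫ g T = if T = univ then cr else 0
  have hC : ∀ T : Finset (Fin n),
      cr ≫ g T = if T = Finset.univ then cr else 0 := by
    intro T
    rw [hcr, Preadditive.sum_comp]
    simp only [Preadditive.zsmul_comp, hB]
    have key : ∑ S : Finset (Fin n), ((-1 : ℤ) ^ (n - S.card)) • g (S ∩ T)
        = ∑ p ∈ T.powerset ×ˢ Tᶜ.powerset,
            (((-1 : ℤ) ^ n * (-1) ^ p.1.card) * (-1) ^ p.2.card) • g p.1 := by
      refine Finset.sum_nbij' (i := fun S => (S ∩ T, S \ T))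
        (j := fun p => p.1 ∪ p.2) ?_ ?_ ?_ ?_ ?_
      · intro S _
        simp only [Finset.mem_product, Finset.mem_powerset]
        constructor
        · exact Finset.inter_subset_right
        · intro x hx
          simp only [Finset.mem_sdiff] at hx
          simp [hx.2]
      · intro p _; exact Finset.mem_univ _
      · intro S _
        simp only
        rw [Finset.union_comm, Finset.sdiff_union_inter]
      · intro p hp
        simp only [Finset.mem_product, Finset.mem_powerset] at hp
        obtain ⟨h1, h2⟩ := hp
        have hd : Disjoint p.2 T := by
          rw [Finset.disjoint_left]
          intro a ha hat
          have := h2 ha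
          simp [hat] at this
        refine Prod.ext ?_ ?_
        · show (p.1 ∪ p.2) ∩ T = p.1
          rw [Finset.union_inter_distrib_right, Finset.inter_eq_left.mpr h1,
            (Finset.disjoint_iff_inter_eq_empty.mp hd), Finset.union_empty]
        · show (p.1 ∪ p.2) \ T = p.2
          rw [Finset.union_sdiff_distrib, Finset.sdiff_eq_empty_iff_subset.mpr h1,
            Finset.empty_union, (hd.sdiff_eq_left)]
      · intro S _
        have hcd : (S ∩ T).card + (S \ T).card = S.card := by
          rw [Finset.card_inter_add_card_sdiff]
        rw [hs, ← hcd, pow_add, mul_assoc]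
    rw [key, Finset.sum_product]
    have hfac : ∀ V ∈ T.powerset,
        (∑ W ∈ Tᶜ.powerset, (((-1 : ℤ) ^ n * (-1) ^ V.card) * (-1) ^ W.card) • g V)
          = (if T = Finset.univ then ((-1 : ℤ) ^ n * (-1) ^ V.card) • g V else 0) := by
      intro V _
      rw [← Finset.sum_smul, ← Finset.mul_sum, Finset.sum_powerset_neg_one_pow_card]
      have hce : Tᶜ = ∅ ↔ T = Finset.univ := by
        rw [← Finset.bot_eq_empty, ← Finset.top_eq_univ]; exact compl_eq_bot
      by_cases h : T = Finset.univ
      · simp [h, hce.mpr h]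
      · have : Tᶜ ≠ ∅ := fun hc => h (hce.mp hc)
        simp [h, this]
    rw [Finset.sum_congr rfl hfac]
    by_cases h : T = Finset.univ
    · simp only [h, if_true]
      subst h
      rw [Finset.powerset_univ]
      refine Finset.sum_congr rfl fun S _ => ?_
      rw [hs]
    · simp [h]
  -- finish
  nth_rewrite 2 [hcr]
  rw [Preadditive.comp_sum]
  simp only [Preadditive.comp_zsmul]
  have : ∀ T : Finset (Fin n), T ∈ Finset.univ →
      ((-1 : ℤ) ^ (n - T.card)) • (cr ≫ g T)
        = if T = Finset.univ then ((-1 : ℤ) ^ (n - T.card)) • cr else 0 := by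
    intro T _
    rw [hC]
    by_cases h : T = Finset.univ <;> simp [h]
  rw [Finset.sum_congr rfl this, Finset.sum_ite_eq' Finset.univ Finset.univ]
  simp
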